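/- If A and B are bounded self-adjoint operators on a complex Hilbert space with AB = λBA, AB ≠ 0, and A is positive (i.e., A ≥ 0), then λ = 1, i.e., A and B commute. -/

import Mathlib

variable {H : Type*} [NormedAddCommGroup H] [InnerProductSpace ℂ H] [CompleteSpace H]

theorem stmt8 (A B : H →L[ℂ] H) (lam : ℂ)
    (hA : A.IsPositive) (hB : IsSelfAdjoint B)
    (h : A * B = lam • (B * A)) (hne : A * B ≠ 0) :
    lam = 1 ∧ A * B = B * A := by
  have hA' : IsSelfAdjoint A := hA.isSelfAdjoint
  have : Nontrivial (H →L[ℂ] H) := ⟨⟨A * B, 0, hne⟩⟩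
  -- take the star (adjoint) of the hypothesis
  have hstar : B * A = (starRingEnd ℂ) lam • (A * B) := by
    have := congrArg star h
    rwa [star_mul, hA'.star_eq, hB.star_eq, star_smul, star_mul, hA'.star_eq, hB.star_eq]
      at this
  -- |lam|² = 1
  have hmod : lam * (starRingEnd ℂ) lam = 1 := by
    have h2 : A * B = (lam * (starRingEnd ℂ) lam) • (A * B) := by
      conv_lhs => rw [h, hstar, smul_smul]
    by_contra hc
    apply hne
    have h3 : (lam * (starRingEnd ℂ) lam - 1) • (A * B) = 0 := by
      rw [sub_smul, one_smul, ← h2, sub_self]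
    rcases smul_eq_zero.mp h3 with h4 | h4
    · exact absurd (by linear_combination h4) hc
    · exact h4
  have hlam0 : lam ≠ 0 := by
    intro h0
    rw [h0] at hmod; simp at hmod
  -- choose a square root mu of conj lam
  obtain ⟨mu, hmu⟩ : ∃ z : ℂ, z ^ 2 = (starRingEnd ℂ) lam :=
    IsAlgClosed.exists_pow_nat_eq _ (by norm_num)
  have hmu0 : mu ≠ 0 := by
    intro h0
    rw [h0] at hmu
    simp at hmu
    exact hlam0 (by simpa using congrArg (starRingEnd ℂ) hmu.symm)
  -- |mu|² = 1
  have hmumu : (starRingEnd ℂ) mu * mu = 1 := by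
    have hsq : ((starRingEnd ℂ) mu * mu) ^ 2 = 1 := by
      have : (starRingEnd ℂ) (mu ^ 2) * mu ^ 2 = 1 := by
        rw [hmu]
        simpa [mul_comm] using hmod
      calc ((starRingEnd ℂ) mu * mu) ^ 2 = (starRingEnd ℂ) (mu ^ 2) * mu ^ 2 := by
            rw [map_pow]; ring
        _ = 1 := this
    have hre : ((starRingEnd ℂ) mu * mu) = (Complex.normSq mu : ℂ) := by
      rw [mul_comm, Complex.mul_conj]
    rw [hre] at hsq ⊢
    have : (Complex.normSq mu : ℝ) ^ 2 = 1 := by exact_mod_cast hsq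
    have hnn : (0:ℝ) ≤ Complex.normSq mu := Complex.normSq_nonneg mu
    have : (Complex.normSq mu : ℝ) = 1 := by nlinarith
    rw [this]; norm_num
  -- R = mu • (A*B) is self-adjoint
  set R : H →L[ℂ] H := mu • (A * B) with hRdef
  have hR : IsSelfAdjoint R := by
    rw [IsSelfAdjoint, hRdef, star_smul, star_mul, hA'.star_eq, hB.star_eq, hstar, smul_smul]
    congr 1
    calc (starRingEnd ℂ) mu * (starRingEnd ℂ) lam = (starRingEnd ℂ) mu * mu ^ 2 := by rw [hmu]
      _ = ((starRingEnd ℂ) mu * mu) * mu := by ring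
      _ = mu := by rw [hmumu, one_mul]
  -- the square root of A
  have hApos : (0 : H →L[ℂ] H) ≤ A := (ContinuousLinearMap.nonneg_iff_isPositive A).mpr hA
  set S : H →L[ℂ] H := CFC.sqrt A with hSdef
  have hSS : S * S = A := CFC.sqrt_mul_sqrt_self A hApos
  have hSsa : IsSelfAdjoint S := IsSelfAdjoint.of_nonneg (CFC.sqrt_nonneg A)
  -- nonzero spectrum of A*B is real
  have hspecAB : ∀ z ∈ spectrum ℂ (A * B), z = 0 ∨ z.im = 0 := by
    intro z hz
    by_cases hz0 : z = 0
    · exact Or.inl hz0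
    · right
      have hz' : z ∈ spectrum ℂ (S * (S * B)) \ {0} := by
        rw [← mul_assoc, hSS]
        exact ⟨hz, hz0⟩
      rw [spectrum.nonzero_mul_comm] at hz'
      have hsel : IsSelfAdjoint ((S * B) * S) := by
        rw [IsSelfAdjoint, star_mul, star_mul, hSsa.star_eq, hB.star_eq, mul_assoc]
      have := hsel.mem_spectrum_eq_re hz'.1
      rw [this]; simp
  -- case on whether mu is real
  have hlam1 : lam = 1 := by
    by_cases hmuim : mu.im = 0
    · -- mu real, so conj lam = mu² ≥ 0 real with modulus one hence lam = 1
      obtain ⟨r, hr⟩ : ∃ r : ℝ, mu = (r : ℂ) :=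
        ⟨mu.re, Complex.ext rfl (by simpa using hmuim)⟩
      have hclam : (starRingEnd ℂ) lam = ((r ^ 2 : ℝ) : ℂ) := by
        rw [← hmu, hr]; push_cast; ring
      have hlamre : lam = ((r ^ 2 : ℝ) : ℂ) := by
        have := congrArg (starRingEnd ℂ) hclam
        simpa [Complex.conj_conj, Complex.conj_ofReal] using this
      rw [hlamre, Complex.conj_ofReal] at hmod
      have h1 : (r ^ 2 : ℝ) * (r ^ 2 : ℝ) = 1 := by exact_mod_cast hmod
      have h2 : (r ^ 2 : ℝ) = 1 := by nlinarith [sq_nonneg r]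
      rw [hlamre, h2]; norm_num
    · -- mu not real: then the spectrum of R is {0}, so R = 0, contradiction
      exfalso
      have hsub : spectrum ℂ R ⊆ {0} := by
        intro z hz
        have hzre : z = z.re := hR.mem_spectrum_eq_re hz
        have hzR : z ∈ spectrum ℂ ((Units.mk0 mu hmu0) • (A * B)) := by
          simpa [hRdef, Units.smul_def] using hz
        rw [spectrum.unit_smul_eq_smul] at hzR
        obtain ⟨w, hw, hwz⟩ := hzR
        rcases hspecAB w hw with hw0 | hwim
        · simp [← hwz, hw0, Units.smul_def]
        · -- w real, z = mu * w real forces w = 0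
          have hzw : z = mu * w := by
            rw [← hwz]; simp [Units.smul_def]
          have him : z.im = mu.re * w.im + mu.im * w.re := by
            rw [hzw]; exact Complex.mul_im mu w
          have hzim : z.im = 0 := by rw [hzre]; simp
          have hwre : w.re = 0 := by
            rw [hzim, hwim] at him
            have h5 : mu.im * w.re = 0 := by linarith [him]
            rcases mul_eq_zero.mp h5 with h6 | h6
            · exact absurd h6 hmuim
            · exact h6
          have hw0 : w = 0 := Complex.ext hwre hwim
          simp [← hwz, hw0, Units.smul_def]
      have hspecR : spectrum ℂ R = {0} := by
        apply Set.eq_singleton_iff_nonempty_unique_mem.mpr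
        exact ⟨spectrum.nonempty R, fun z hz => hsub hz⟩
      have hrad : spectralRadius ℂ R = 0 := by
        rw [spectralRadius, hspecR]
        simp
      have hnorm : (‖R‖₊ : ENNReal) = 0 := by
        rw [← hR.spectralRadius_eq_nnnorm, hrad]
      have hR0 : R = 0 := by
        have : ‖R‖₊ = 0 := by exact_mod_cast hnorm
        simpa using this
      rw [hRdef] at hR0
      rcases smul_eq_zero.mp hR0 with h4 | h4
      · exact hmu0 h4
      · exact hne h4
  exact ⟨hlam1, by rw [h, hlam1, one_smul]⟩
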